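/- Let φ : Fans_d → G be a fan valuation and let A be a linear hyperplane arrangement that is not a singleton. Then for every H ∈ A, φ(Fan(A)) = φ(Fan(A∖H)) + φ(Fan(A/H)). -/

import Mathlib

open scoped Pointwise
open MeasureTheory RealInnerProductSpace

noncomputable section

/-- Euclidean space `ℝ^d`. -/
abbrev Ed (d : ℕ) : Type := EuclideanSpace ℝ (Fin d)

/-- A polyhedral cone in `ℝ^d`: a (nonempty) finite intersection of closed linear
halfspaces; it automatically contains the origin. -/
def IsPolyCone (d : ℕ) (C : Set (Ed d)) : Prop :=
  ∃ s : Finset (Ed d), C = {x | ∀ c ∈ s, ⟪c, x⟫ ≤ 0}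

/-- A face of a cone `C`: the intersection of `C` with a supporting linear hyperplane
(`C` itself being a face, for `c = 0`). -/
def IsFaceOf (d : ℕ) (C F : Set (Ed d)) : Prop :=
  ∃ c : Ed d, (∀ x ∈ C, ⟪c, x⟫ ≤ 0) ∧ F = {x ∈ C | ⟪c, x⟫ = 0}

/-- Dimension of a subset of `ℝ^d` (dimension of its linear span). -/
def setDim (d : ℕ) (S : Set (Ed d)) : ℕ :=
  Module.finrank ℝ (Submodule.span ℝ S)

/-- Dimension of the lineality space of a cone `C`, i.e. of the maximal linear
subspace `C ∩ (-C)` contained in `C`. -/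
def linealDim (d : ℕ) (C : Set (Ed d)) : ℕ :=
  setDim d (C ∩ (-C))

/-- A fan: a finite collection of polyhedral cones, pairwise meeting in common faces,
and all having the same linear span. -/
def IsFan (d : ℕ) (N : Set (Set (Ed d))) : Prop :=
  N.Finite ∧ (∀ C ∈ N, IsPolyCone d C) ∧
    (∀ C ∈ N, ∀ C' ∈ N, IsFaceOf d C (C ∩ C') ∧ IsFaceOf d C' (C ∩ C')) ∧
    (∀ C ∈ N, ∀ C' ∈ N, Submodule.span ℝ C = Submodule.span ℝ C')

/-- The restriction `N ∩ S` of a fan to a set `S`. -/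
def fanInter (d : ℕ) (N : Set (Set (Ed d))) (S : Set (Ed d)) : Set (Set (Ed d)) :=
  {D | ∃ C ∈ N, (intrinsicInterior ℝ C ∩ S).Nonempty ∧ D = C ∩ S}

/-- A fan valuation: `φ ∅ = 0` and `φ(N) = φ(N ∩ H^≤) + φ(N ∩ H^≥) - φ(N ∩ H)`
for every fan `N` and every linear hyperplane `H` of `lin N` (encoded by a nonzero
normal vector `c ∈ lin N`). -/
def IsFanValuation (d : ℕ) {G : Type*} [AddCommGroup G] (φ : Set (Set (Ed d)) → G) : Prop :=
  φ ∅ = 0 ∧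
    ∀ N : Set (Set (Ed d)), IsFan d N →
      ∀ c : Ed d, c ≠ 0 → (∀ C ∈ N, c ∈ Submodule.span ℝ C) →
        φ N = φ (fanInter d N {x | ⟪c, x⟫ ≤ 0}) + φ (fanInter d N {x | 0 ≤ ⟪c, x⟫})
              - φ (fanInter d N {x | ⟪c, x⟫ = 0})

/-- A rotation of `ℝ^d`: a linear isometry of determinant `1`. -/
def IsRotation (d : ℕ) (g : Ed d ≃ₗᵢ[ℝ] Ed d) : Prop :=
  LinearMap.det (g.toLinearEquiv : Ed d →ₗ[ℝ] Ed d) = 1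

/-- The image fan `g · N`. -/
def fanMap (d : ℕ) (g : Ed d ≃ₗᵢ[ℝ] Ed d) (N : Set (Set (Ed d))) : Set (Set (Ed d)) :=
  (fun C => g '' C) '' N

/-- `H` is a linear hyperplane of the subspace `L`. -/
def IsHyperplaneOf (d : ℕ) (H L : Submodule ℝ (Ed d)) : Prop :=
  H ≤ L ∧ Module.finrank ℝ H + 1 = Module.finrank ℝ L

/-- (The data of) a hyperplane arrangement: an ambient subspace together with a finite
set of subspaces (intended: hyperplanes of the ambient space). -/
structure Arrangement (d : ℕ) where
  space : Submodule ℝ (Ed d)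
  hyps : Finset (Submodule ℝ (Ed d))

variable {d : ℕ}

/-- The data are an actual arrangement: each member is a hyperplane of the ambient
subspace. -/
def Arrangement.IsArrangement (A : Arrangement d) : Prop :=
  ∀ H ∈ A.hyps, IsHyperplaneOf d H A.space

/-- A `k`-singleton: an arrangement consisting of a single hyperplane of a
`k`-dimensional subspace. -/
def Arrangement.IsSingletonArr (A : Arrangement d) (k : ℕ) : Prop :=
  A.IsArrangement ∧ A.hyps.card = 1 ∧ Module.finrank ℝ A.space = k

/-- The complement `L \ ∪ A` of an arrangement in its ambient subspace. -/
def arrComplement (A : Arrangement d) : Set (Ed d) :=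
  (A.space : Set (Ed d)) \ ⋃ H ∈ A.hyps, (H : Set (Ed d))

/-- The fan of an arrangement: closures of the connected components of the complement. -/
def arrFan (A : Arrangement d) : Set (Set (Ed d)) :=
  {C | ∃ x ∈ arrComplement A, C = closure (connectedComponentIn (arrComplement A) x)}

/-- Deletion `A ∖ H`. -/
def Arrangement.delete (A : Arrangement d) (H : Submodule ℝ (Ed d)) : Arrangement d :=
  letI := Classical.decEq (Submodule ℝ (Ed d))
  ⟨A.space, A.hyps.erase H⟩

/-- Restriction `A / H`. -/
def Arrangement.restrict (A : Arrangement d) (H : Submodule ℝ (Ed d)) : Arrangement d :=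
  letI := Classical.decEq (Submodule ℝ (Ed d))
  ⟨H, (A.hyps.erase H).image (fun H' => H' ⊓ H)⟩

open Polynomial in
/-- The recursive definition of the unsigned characteristic polynomial:
`χ̄_A(t) = t^k + t^(k-1)` for a `k`-singleton, and
`χ̄_A = χ̄_{A∖H} + χ̄_{A/H}` for `H ∈ A` otherwise.  Its coefficients are the unsigned
Whitney numbers of the first kind. -/
inductive IsCharPoly (d : ℕ) : Arrangement d → Polynomial ℤ → Prop
  | singleton (A : Arrangement d) (k : ℕ) (hk : 1 ≤ k) (hA : A.IsSingletonArr k) :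
      IsCharPoly d A (X ^ k + X ^ (k - 1))
  | deletion_restriction (A : Arrangement d) (H : Submodule ℝ (Ed d)) (hH : H ∈ A.hyps)
      (hcard : 1 < A.hyps.card) (p q : Polynomial ℤ)
      (hp : IsCharPoly d (A.delete H) p) (hq : IsCharPoly d (A.restrict H) q) :
      IsCharPoly d A (p + q)

open Classical in
/-- The metric projection (nearest-point map) of a set `C ⊆ ℝ^d`: the unique nearest
point when it exists (as it does for nonempty closed convex sets). -/
def metricProj (d : ℕ) (C : Set (Ed d)) (x : Ed d) : Ed d :=
  if h : ∃! y, y ∈ C ∧ ∀ z ∈ C, dist x y ≤ dist x z then h.choose else 0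

/-- The normal cone `N_F C` of `C` at a face `F`. -/
def normalCone (d : ℕ) (C F : Set (Ed d)) : Set (Ed d) :=
  {c | ∀ x ∈ C, ∀ y ∈ F, ⟪c, x⟫ ≤ ⟪c, y⟫}

/-- `Π_k(C)`: points `x` whose nearest point of `C` lies in the relative interior of a
`k`-dimensional face of `C`. -/
def Pik (d : ℕ) (C : Set (Ed d)) (k : ℕ) : Set (Ed d) :=
  {x | ∃ F, IsFaceOf d C F ∧ metricProj d C x ∈ intrinsicInterior ℝ F ∧ setDim d F = k}

/-- The `k`-th spherical intrinsic volume of a cone. -/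
def sphIntrinsicVol (d : ℕ) (C : Set (Ed d)) (k : ℕ) : ℝ :=
  (volume (Pik d C k ∩ Metric.closedBall (0 : Ed d) 1)).toReal /
    (volume (Metric.closedBall (0 : Ed d) 1)).toReal

/-- The `k`-th spherical intrinsic volume of a fan. -/
def fanIntrinsicVol (d : ℕ) (N : Set (Set (Ed d))) (k : ℕ) : ℝ :=
  ∑ᶠ C ∈ N, sphIntrinsicVol d C k

/-- The indicator-valued spherical intrinsic volume
`V_k(C) = Σ_F [Π_F(C)]`, the sum over all `k`-dimensional faces `F` of `C` of the
indicator functions of `Π_F(C) = π_C⁻¹(F)`. -/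
def Vk (d : ℕ) (C : Set (Ed d)) (k : ℕ) (x : Ed d) : ℤ :=
  ∑ᶠ F ∈ {F | IsFaceOf d C F ∧ setDim d F = k},
    Set.indicator (metricProj d C ⁻¹' F) (fun _ => (1 : ℤ)) x

/-- The polar cone `C^∨`. -/
def polarCone (d : ℕ) (C : Set (Ed d)) : Set (Ed d) :=
  {c | ∀ x ∈ C, ⟪c, x⟫ ≤ 0}

/-- The lattice of flats of an arrangement: all intersections of subfamilies (the empty
intersection being the ambient space). -/
def flats (A : Arrangement d) : Set (Submodule ℝ (Ed d)) :=
  {L | ∃ S : Finset (Submodule ℝ (Ed d)), S ⊆ A.hyps ∧ L = A.space ⊓ S.inf id}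

/-- `μ` is the Möbius function of the lattice of flats of `A`, ordered by *reverse*
inclusion: `μ(L,L) = 1` and `μ(L,M) = - Σ_{L ≼ Z ≺ M} μ(L,Z)` for `M ⊊ L`. -/
def IsMobiusOf (A : Arrangement d)
    (μ : Submodule ℝ (Ed d) → Submodule ℝ (Ed d) → ℤ) : Prop :=
  (∀ L ∈ flats A, μ L L = 1) ∧
    ∀ L ∈ flats A, ∀ M ∈ flats A, M < L →
      μ L M = -∑ᶠ Z ∈ {Z | Z ∈ flats A ∧ Z ≤ L ∧ M < Z}, μ L Z

/-- A polyhedron: a nonempty finite intersection of closed affine halfspaces. -/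
def IsPolyhedron (d : ℕ) (Q : Set (Ed d)) : Prop :=
  Q.Nonempty ∧ ∃ s : Finset (Ed d × ℝ), Q = {x | ∀ p ∈ s, ⟪p.1, x⟫ ≤ p.2}

/-- A nonempty face of a polyhedron `Q`. -/
def IsFaceOfPolyhedron (d : ℕ) (Q F : Set (Ed d)) : Prop :=
  F.Nonempty ∧ ∃ (c : Ed d) (α : ℝ), (∀ x ∈ Q, ⟪c, x⟫ ≤ α) ∧
    F = {x ∈ Q | ⟪c, x⟫ = α}

/-- Dimension of a subset of `ℝ^d` as dimension of its affine hull. -/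
def polyDim (d : ℕ) (S : Set (Ed d)) : ℕ :=
  Module.finrank ℝ (vectorSpan ℝ S)

/-- The Euler characteristic `ε(Q) = Σ_F (-1)^(dim F)` of a polyhedron. -/
def eulerChar (d : ℕ) (Q : Set (Ed d)) : ℤ :=
  ∑ᶠ F ∈ {F | IsFaceOfPolyhedron d Q F}, (-1 : ℤ) ^ polyDim d F

end

namespace FVDR
open scoped RealInnerProductSpace

variable {d : ℕ}

/-- open cell -/
def cS (M : Submodule ℝ (Ed d)) (s : Finset (Ed d)) (σ : Ed d → ℝ) : Set (Ed d) :=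
  {x | x ∈ M ∧ ∀ c ∈ s, σ c * ⟪c, x⟫ < 0}

/-- closed cell -/
def cC (M : Submodule ℝ (Ed d)) (s : Finset (Ed d)) (σ : Ed d → ℝ) : Set (Ed d) :=
  {x | x ∈ M ∧ ∀ c ∈ s, σ c * ⟪c, x⟫ ≤ 0}

def Signs (s : Finset (Ed d)) (σ : Ed d → ℝ) : Prop := ∀ c ∈ s, σ c = 1 ∨ σ c = -1

def Wc (M : Submodule ℝ (Ed d)) (s : Finset (Ed d)) : Set (Ed d) :=
  {x | x ∈ M ∧ ∀ c ∈ s, ⟪c, x⟫ ≠ 0}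

variable {M : Submodule ℝ (Ed d)} {s : Finset (Ed d)} {σ : Ed d → ℝ}

lemma cS_subset_cC : cS M s σ ⊆ cC M s σ := fun x hx => ⟨hx.1, fun c hc => (hx.2 c hc).le⟩

lemma cS_subset_W : cS M s σ ⊆ Wc M s := fun x hx =>
  ⟨hx.1, fun c hc h0 => by have := hx.2 c hc; rw [h0, mul_zero] at this; exact lt_irrefl 0 this⟩

lemma W_inter_cC_subset_cS (hσ : Signs s σ) : Wc M s ∩ cC M s σ ⊆ cS M s σ := by
  rintro x ⟨⟨hxM, hx0⟩, -, hxw⟩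
  refine ⟨hxM, fun c hc => ?_⟩
  rcases lt_or_eq_of_le (hxw c hc) with h | h
  · exact h
  · exfalso
    apply hx0 c hc
    rcases hσ c hc with h1 | h1 <;> rw [h1] at h <;> linarith

lemma continuous_inner_left (c : Ed d) : Continuous fun x : Ed d => ⟪c, x⟫ :=
  continuous_const.inner continuous_id

lemma isOpen_strict : IsOpen {x : Ed d | ∀ c ∈ s, σ c * ⟪c, x⟫ < 0} := by
  have : {x : Ed d | ∀ c ∈ s, σ c * ⟪c, x⟫ < 0} = ⋂ c ∈ s, {x | σ c * ⟪c, x⟫ < 0} := by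
    ext x; simp
  rw [this]
  exact isOpen_biInter_finset fun c _ =>
    isOpen_lt (continuous_const.mul (continuous_inner_left c)) continuous_const

lemma isClosed_cC : IsClosed (cC M s σ) := by
  have : cC M s σ = (M : Set (Ed d)) ∩ ⋂ c ∈ s, {x | σ c * ⟪c, x⟫ ≤ 0} := by
    ext x; simp [cC]
  rw [this]
  exact M.closed_of_finiteDimensional.inter <| isClosed_biInter fun c _ =>
    isClosed_le (continuous_const.mul (continuous_inner_left c)) continuous_const

lemma convex_cS : Convex ℝ (cS M s σ) := by
  have : cS M s σ = (M : Set (Ed d)) ∩ ⋂ c ∈ s, {x | σ c * ⟪c, x⟫ < 0} := by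
    ext x; simp [cS]
  rw [this]
  refine (M.convex).inter <| convex_iInter fun c => convex_iInter fun _ => ?_
  exact convex_halfSpace_lt ⟨fun a b => by simp [inner_add_right]; ring,
    fun r a => by simp [inner_smul_right]; ring⟩ 0

lemma cC_smul_mem {x : Ed d} (hx : x ∈ cC M s σ) {t : ℝ} (ht : 0 ≤ t) : t • x ∈ cC M s σ := by
  refine ⟨M.smul_mem t hx.1, fun c hc => ?_⟩
  rw [inner_smul_right]
  calc σ c * (t * ⟪c, x⟫) = t * (σ c * ⟪c, x⟫) := by ring
    _ ≤ 0 := mul_nonpos_of_nonneg_of_nonpos ht (hx.2 c hc)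

/-- L1: closure of the open cell is the closed cell. -/
lemma closure_cS (hne : (cS M s σ).Nonempty) : closure (cS M s σ) = cC M s σ := by
  obtain ⟨x, hx⟩ := hne
  apply Set.Subset.antisymm
  · exact closure_minimal cS_subset_cC isClosed_cC
  · intro y hy
    have key : ∀ t : ℝ, 0 < t → t ≤ 1 → y + t • (x - y) ∈ cS M s σ := by
      intro t ht0 ht1
      refine ⟨M.add_mem hy.1 (M.smul_mem t (M.sub_mem hx.1 hy.1)), fun c hc => ?_⟩
      have : σ c * ⟪c, y + t • (x - y)⟫ = (1 - t) * (σ c * ⟪c, y⟫) + t * (σ c * ⟪c, x⟫) := by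
        rw [inner_add_right, inner_smul_right, inner_sub_right]; ring
      rw [this]
      have h1 : (1 - t) * (σ c * ⟪c, y⟫) ≤ 0 :=
        mul_nonpos_of_nonneg_of_nonpos (by linarith) (hy.2 c hc)
      have h2 : t * (σ c * ⟪c, x⟫) < 0 := mul_neg_of_pos_of_neg ht0 (hx.2 c hc)
      linarith
    have hcont : Continuous (fun t : ℝ => y + t • (x - y)) := by continuity
    have htd : Filter.Tendsto (fun t : ℝ => y + t • (x - y))
        (nhdsWithin 0 (Set.Ioc 0 1)) (nhds y) := by
      have h2 := (hcont.tendsto 0).mono_left (nhdsWithin_le_nhds (s := Set.Ioc (0:ℝ) 1))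
      simpa using h2
    haveI : (nhdsWithin (0:ℝ) (Set.Ioc 0 1)).NeBot := by
      rw [nhdsWithin_Ioc_eq_nhdsGT one_pos]
      infer_instance
    refine mem_closure_of_tendsto htd ?_
    filter_upwards [self_mem_nhdsWithin] with t ht
    exact key t ht.1 ht.2

/-- L2: the open cell is the connected component of its points in `Wc`. -/
lemma connectedComponentIn_W {x : Ed d} (hσ : Signs s σ) (hx : x ∈ cS M s σ) :
    connectedComponentIn (Wc M s) x = cS M s σ := by
  apply Set.Subset.antisymm
  · -- component ⊆ cS
    set O := {z : Ed d | ∀ c ∈ s, σ c * ⟪c, z⟫ < 0} with hO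
    set F := {z : Ed d | ∀ c ∈ s, σ c * ⟪c, z⟫ ≤ 0} with hF
    have hOopen : IsOpen O := isOpen_strict
    have hFclosed : IsClosed F := by
      have : F = ⋂ c ∈ s, {z : Ed d | σ c * ⟪c, z⟫ ≤ 0} := by ext z; simp [hF]
      rw [this]
      exact isClosed_biInter fun c _ =>
        isClosed_le (continuous_const.mul (continuous_inner_left c)) continuous_const
    have hFc : IsOpen Fᶜ := hFclosed.isOpen_compl
    have hsub : connectedComponentIn (Wc M s) x ⊆ O ∪ Fᶜ := by
      intro z hz
      have hzW := connectedComponentIn_subset (Wc M s) x hz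
      by_cases hzF : z ∈ F
      · refine Or.inl fun c hc => ?_
        rcases lt_or_eq_of_le (hzF c hc) with h | h
        · exact h
        · exfalso
          apply hzW.2 c hc
          rcases hσ c hc with h1 | h1 <;> rw [h1] at h <;> linarith
      · exact Or.inr hzF
    have hpc : IsPreconnected (connectedComponentIn (Wc M s) x) :=
      isPreconnected_connectedComponentIn
    have hxO : x ∈ connectedComponentIn (Wc M s) x ∩ O :=
      ⟨mem_connectedComponentIn (cS_subset_W hx), hx.2⟩
    by_contra hns
    rw [Set.not_subset] at hns
    obtain ⟨z, hz, hzn⟩ := hns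
    have hzFc : z ∈ connectedComponentIn (Wc M s) x ∩ Fᶜ := by
      refine ⟨hz, fun hzF => hzn ?_⟩
      exact W_inter_cC_subset_cS hσ ⟨connectedComponentIn_subset _ _ hz,
        (connectedComponentIn_subset _ _ hz).1, hzF⟩
    obtain ⟨w, -, hwO, hwFc⟩ := hpc O Fᶜ hOopen hFc hsub ⟨x, hxO⟩ ⟨z, hzFc⟩
    exact hwFc fun c hc => (hwO c hc).le
  · exact (convex_cS.isPreconnected).subset_connectedComponentIn hx cS_subset_W

lemma zero_mem_cC : (0 : Ed d) ∈ cC M s σ :=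
  ⟨M.zero_mem, fun c _ => by rw [inner_zero_right, mul_zero]⟩

/-- N2: the span of the closed cell is `M`. -/
lemma span_cC (hc : ∀ c ∈ s, c ∈ M) (hne : (cS M s σ).Nonempty) :
    Submodule.span ℝ (cC M s σ) = M := by
  apply le_antisymm
  · rw [Submodule.span_le]; exact fun x hx => hx.1
  · intro v hv
    obtain ⟨x, hx⟩ := hne
    have hxs : x ∈ Submodule.span ℝ (cC M s σ) := Submodule.subset_span (cS_subset_cC hx)
    by_cases hv0 : v = 0
    · simp [hv0]
    obtain ⟨ε, hε, hball⟩ := Metric.isOpen_iff.1 (isOpen_strict (s := s) (σ := σ)) x hx.2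
    have hvn : 0 < ‖v‖ := norm_pos_iff.2 hv0
    set t := ε / (2 * ‖v‖) with htdef
    have ht0 : 0 < t := by positivity
    have hmem : x + t • v ∈ cS M s σ := by
      refine ⟨M.add_mem hx.1 (M.smul_mem t hv), hball ?_⟩
      rw [Metric.mem_ball, dist_eq_norm, add_sub_cancel_left, norm_smul, Real.norm_eq_abs,
        abs_of_pos ht0, htdef, div_mul_eq_mul_div, div_lt_iff₀ (by positivity)]
      nlinarith
    have hveq : v = t⁻¹ • ((x + t • v) - x) := by
      rw [add_sub_cancel_left, smul_smul, inv_mul_cancel₀ ht0.ne', one_smul]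
    rw [hveq]
    exact Submodule.smul_mem _ _ (Submodule.sub_mem _
      (Submodule.subset_span (cS_subset_cC hmem)) hxs)

/-- N3: closed cells are polyhedral cones. -/
lemma isPolyCone_cC (hσ : Signs s σ) : IsPolyCone d (cC M s σ) := by
  classical
  obtain ⟨S, hS⟩ := IsNoetherian.noetherian Mᗮ
  refine ⟨(s.image fun c => σ c • c) ∪ S ∪ S.image (fun c => -c), ?_⟩
  ext x
  constructor
  · rintro ⟨hxM, hxs⟩
    intro c hcmem
    rcases Finset.mem_union.1 hcmem with hcu | hcu
    · rcases Finset.mem_union.1 hcu with hcu' | hcu'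
      · obtain ⟨c', hc', rfl⟩ := Finset.mem_image.1 hcu'
        rw [real_inner_smul_left]; exact hxs c' hc'
      · have hcM : c ∈ Mᗮ := hS ▸ Submodule.subset_span hcu'
        rw [real_inner_comm, Submodule.mem_orthogonal] at *
        exact le_of_eq (hcM x hxM)
    · obtain ⟨c', hc', rfl⟩ := Finset.mem_image.1 hcu
      have hcM : c' ∈ Mᗮ := hS ▸ Submodule.subset_span hc'
      rw [Submodule.mem_orthogonal] at hcM
      rw [inner_neg_left, real_inner_comm, hcM x hxM, neg_zero]
  · intro h
    have hxM : x ∈ M := by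
      rw [← Submodule.orthogonal_orthogonal M, Submodule.mem_orthogonal]
      intro u hu
      rw [← hS] at hu
      induction hu using Submodule.span_induction with
      | mem c hcmem =>
        have h1 := h c (Finset.mem_union.2 (Or.inl (Finset.mem_union.2 (Or.inr hcmem))))
        have h2 := h (-c) (Finset.mem_union.2 (Or.inr (Finset.mem_image_of_mem _ hcmem)))
        rw [inner_neg_left] at h2
        linarith
      | zero => rw [inner_zero_left]
      | add y z _ _ hy hz => rw [inner_add_left, hy, hz, add_zero]
      | smul a y _ hy => rw [real_inner_smul_left, hy, mul_zero]
    refine ⟨hxM, fun c hcmem => ?_⟩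
    have := h (σ c • c)
      (Finset.mem_union.2 (Or.inl (Finset.mem_union.2 (Or.inl (Finset.mem_image_of_mem _ hcmem)))))
    rwa [real_inner_smul_left] at this

/-- N4: intersections of closed cells are faces. -/
lemma isFaceOf_cC_inter {τ : Ed d → ℝ} (hσ : Signs s σ) (hτ : Signs s τ) :
    IsFaceOf d (cC M s σ) (cC M s σ ∩ cC M s τ) := by
  classical
  refine ⟨∑ c ∈ s.filter (fun c => σ c ≠ τ c), σ c • c, ?_, ?_⟩
  · intro x hx
    rw [sum_inner]
    apply Finset.sum_nonpos
    intro c hcmem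
    rw [real_inner_smul_left]
    exact hx.2 c (Finset.mem_filter.1 hcmem).1
  · ext x
    simp only [Set.mem_inter_iff, Set.mem_setOf_eq]
    constructor
    · rintro ⟨hx1, hx2⟩
      refine ⟨hx1, ?_⟩
      rw [sum_inner]
      apply Finset.sum_eq_zero
      intro c hcmem
      obtain ⟨hcs, hd⟩ := Finset.mem_filter.1 hcmem
      have h1 := hx1.2 c hcs
      have h2 := hx2.2 c hcs
      have hc0 : ⟪c, x⟫ = 0 := by
        rcases hσ c hcs with hs1 | hs1 <;> rcases hτ c hcs with ht1 | ht1 <;>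
          rw [hs1] at h1 <;> rw [ht1] at h2
        · exact absurd (hs1.trans ht1.symm) hd
        · linarith
        · linarith
        · exact absurd (hs1.trans ht1.symm) hd
      rw [real_inner_smul_left, hc0, mul_zero]
    · rintro ⟨hx1, hx2⟩
      rw [sum_inner] at hx2
      have hterm : ∀ c ∈ s.filter (fun c => σ c ≠ τ c), ⟪σ c • c, x⟫ = 0 := by
        rw [← Finset.sum_eq_zero_iff_of_nonpos]
        · exact hx2
        · intro c hcmem
          rw [real_inner_smul_left]
          exact hx1.2 c (Finset.mem_filter.1 hcmem).1
      refine ⟨hx1, hx1.1, fun c hcmem => ?_⟩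
      by_cases hd : σ c = τ c
      · rw [← hd]; exact hx1.2 c hcmem
      · have := hterm c (Finset.mem_filter.2 ⟨hcmem, hd⟩)
        rw [real_inner_smul_left] at this
        have hc0 : ⟪c, x⟫ = 0 := by
          rcases hσ c hcmem with h1 | h1 <;> rw [h1] at this <;> linarith
        rw [hc0, mul_zero]

lemma affineSpan_cC (hc : ∀ c ∈ s, c ∈ M) (hne : (cS M s σ).Nonempty) :
    (affineSpan ℝ (cC M s σ) : Set (Ed d)) = (M : Set (Ed d)) := by
  conv_lhs => rw [← Set.insert_eq_of_mem (zero_mem_cC (M := M) (s := s) (σ := σ))]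
  rw [affineSpan_insert_zero, span_cC hc hne]

lemma mem_affineSpan_cC_iff (hc : ∀ c ∈ s, c ∈ M) (hne : (cS M s σ).Nonempty) (z : Ed d) :
    z ∈ affineSpan ℝ (cC M s σ) ↔ z ∈ M := by
  rw [← SetLike.mem_coe, affineSpan_cC hc hne, SetLike.mem_coe]

/-- N5: the intrinsic interior of the closed cell is the open cell. -/
lemma intrinsicInterior_cC (hc : ∀ c ∈ s, c ∈ M ∧ c ≠ 0) (hσ : Signs s σ)
    (hne : (cS M s σ).Nonempty) : intrinsicInterior ℝ (cC M s σ) = cS M s σ := by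
  have hcm : ∀ c ∈ s, c ∈ M := fun c hcs => (hc c hcs).1
  ext x
  constructor
  · intro hx
    obtain ⟨y, hy, rfl⟩ := mem_intrinsicInterior.1 hx
    have hyC : (y : Ed d) ∈ cC M s σ := Set.mem_preimage.1 (interior_subset hy)
    refine ⟨hyC.1, fun c hcs => ?_⟩
    rcases lt_or_eq_of_le (hyC.2 c hcs) with h | h
    · exact h
    exfalso
    obtain ⟨ε, hε0, hball⟩ := Metric.mem_nhds_iff.1 (mem_interior_iff_mem_nhds.1 hy)
    have hcne : 0 < ‖c‖ := norm_pos_iff.2 (hc c hcs).2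
    set t := ε / (2 * ‖c‖) with htdef
    have ht0 : 0 < t := by positivity
    set z := (y : Ed d) + t • (σ c • c) with hzdef
    have hzM : z ∈ M := M.add_mem hyC.1 (M.smul_mem _ (M.smul_mem _ (hcm c hcs)))
    have hzaff : z ∈ affineSpan ℝ (cC M s σ) := (mem_affineSpan_cC_iff hcm hne z).2 hzM
    have habs : |σ c| = 1 := by rcases hσ c hcs with h1 | h1 <;> rw [h1] <;> norm_num
    have hdist : (⟨z, hzaff⟩ : affineSpan ℝ (cC M s σ)) ∈ Metric.ball y ε := by
      rw [Metric.mem_ball, Subtype.dist_eq]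
      show dist z (y : Ed d) < ε
      rw [dist_eq_norm, hzdef, add_sub_cancel_left, norm_smul, norm_smul, Real.norm_eq_abs,
        Real.norm_eq_abs, abs_of_pos ht0, habs, one_mul, htdef, div_mul_eq_mul_div,
        div_lt_iff₀ (by positivity)]
      nlinarith
    have hzC : z ∈ cC M s σ := hball hdist
    have hle := hzC.2 c hcs
    have hsq : σ c * σ c = 1 := by rcases hσ c hcs with h1 | h1 <;> rw [h1] <;> norm_num
    have hcc : ⟪c, c⟫ = ‖c‖ ^ 2 := real_inner_self_eq_norm_sq c
    have hinner : ⟪c, z⟫ = ⟪c, (y : Ed d)⟫ + t * (σ c * ⟪c, c⟫) := by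
      rw [hzdef, inner_add_right, inner_smul_right, inner_smul_right]
    have heq : σ c * ⟪c, z⟫ = t * ‖c‖ ^ 2 := by
      rw [hinner, hcc]
      have hexp : σ c * (⟪c, (y : Ed d)⟫ + t * (σ c * ‖c‖ ^ 2))
          = σ c * ⟪c, (y : Ed d)⟫ + (σ c * σ c) * (t * ‖c‖ ^ 2) := by ring
      rw [hexp, hsq, h]
      ring
    rw [heq] at hle
    nlinarith [mul_pos ht0 (mul_pos hcne hcne)]
  · intro hx
    rw [mem_intrinsicInterior]
    have hxaff : x ∈ affineSpan ℝ (cC M s σ) := (mem_affineSpan_cC_iff hcm hne x).2 hx.1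
    refine ⟨⟨x, hxaff⟩, ?_, rfl⟩
    have hsub : ((↑) ⁻¹' {z : Ed d | ∀ c ∈ s, σ c * ⟪c, z⟫ < 0} :
        Set (affineSpan ℝ (cC M s σ))) ⊆ (↑) ⁻¹' cC M s σ := by
      intro y hy
      have hyM : (y : Ed d) ∈ M := (mem_affineSpan_cC_iff hcm hne _).1 y.2
      exact ⟨hyM, fun c hcs => (hy c hcs).le⟩
    exact interior_maximal hsub (isOpen_strict.preimage continuous_subtype_val)
      (Set.mem_preimage.2 hx.2)

/-- canonical sign function of a point -/
noncomputable def sgn (x : Ed d) : Ed d → ℝ := fun c => if ⟪c, x⟫ < 0 then 1 else -1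

lemma sgn_eq_one {x c : Ed d} (h : ⟪c, x⟫ < 0) : sgn x c = 1 := if_pos h

lemma sgn_eq_negone {x c : Ed d} (h : ¬ ⟪c, x⟫ < 0) : sgn x c = -1 := if_neg h

lemma sgn_signs {x : Ed d} {s : Finset (Ed d)} : Signs s (sgn x) := by
  intro c _
  by_cases h : ⟪c, x⟫ < 0
  · exact Or.inl (sgn_eq_one h)
  · exact Or.inr (sgn_eq_negone h)

lemma sgn_mul_neg {x c : Ed d} (h : ⟪c, x⟫ ≠ 0) : sgn x c * ⟪c, x⟫ < 0 := by
  by_cases hlt : ⟪c, x⟫ < 0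
  · rw [sgn_eq_one hlt, one_mul]; exact hlt
  · rw [sgn_eq_negone hlt, neg_one_mul]
    have : 0 < ⟪c, x⟫ := lt_of_le_of_ne (not_lt.1 hlt) (Ne.symm h)
    linarith

/-- The family of cells of a "sign arrangement". -/
def fanSet (M : Submodule ℝ (Ed d)) (s : Finset (Ed d)) : Set (Set (Ed d)) :=
  {C | ∃ σ : Ed d → ℝ, Signs s σ ∧ (cS M s σ).Nonempty ∧ C = cC M s σ}

lemma finite_fanSet : (fanSet M s).Finite := by
  classical
  apply Set.Finite.subset (Set.Finite.image (fun u : Finset (Ed d) =>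
    {x : Ed d | x ∈ M ∧ ∀ c ∈ s, if c ∈ u then ⟪c, x⟫ ≤ 0 else 0 ≤ ⟪c, x⟫})
    s.powerset.finite_toSet)
  rintro C ⟨σ, hσ, -, rfl⟩
  refine ⟨s.filter (fun c => σ c = 1), Finset.mem_powerset.2 (Finset.filter_subset _ _), ?_⟩
  ext x
  simp only [Set.mem_setOf_eq]
  refine and_congr_right fun _ => forall₂_congr fun c hcm => ?_
  rcases hσ c hcm with h1 | h1
  · rw [if_pos (Finset.mem_filter.2 ⟨hcm, h1⟩), h1, one_mul]
  · rw [if_neg (by rw [Finset.mem_filter]; rintro ⟨-, h2⟩; rw [h1] at h2; norm_num at h2),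
      h1, neg_one_mul, neg_nonpos]

lemma isFan_fanSet (hc : ∀ c ∈ s, c ∈ M ∧ c ≠ 0) : IsFan d (fanSet M s) := by
  refine ⟨finite_fanSet, ?_, ?_, ?_⟩
  · rintro C ⟨σ, hσ, -, rfl⟩; exact isPolyCone_cC hσ
  · rintro C ⟨σ, hσ, hne, rfl⟩ C' ⟨τ, hτ, hne', rfl⟩
    exact ⟨isFaceOf_cC_inter hσ hτ, by rw [Set.inter_comm]; exact isFaceOf_cC_inter hτ hσ⟩
  · rintro C ⟨σ, hσ, hne, rfl⟩ C' ⟨τ, hτ, hne', rfl⟩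
    rw [span_cC (fun c hcs => (hc c hcs).1) hne, span_cC (fun c hcs => (hc c hcs).1) hne']

/-- Characterization of arrangement fans as families of cells. -/
lemma arrFan_eq (A : Arrangement d) (s : Finset (Ed d))
    (hdesc : ∀ x ∈ A.space, ((∀ K ∈ A.hyps, x ∉ K) ↔ ∀ c ∈ s, ⟪c, x⟫ ≠ 0)) :
    arrFan A = fanSet A.space s := by
  have hW : arrComplement A = Wc A.space s := by
    ext x
    constructor
    · rintro ⟨hxL, hxn⟩
      refine ⟨hxL, (hdesc x hxL).1 fun K hK hxK => hxn ?_⟩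
      exact Set.mem_biUnion hK hxK
    · rintro ⟨hxL, hxn⟩
      refine ⟨hxL, fun hmem => ?_⟩
      obtain ⟨K, hK, hxK⟩ := Set.mem_iUnion₂.1 hmem
      exact (hdesc x hxL).2 hxn K hK hxK
  ext C
  constructor
  · rintro ⟨x, hx, rfl⟩
    rw [hW] at hx ⊢
    classical
    set σ : Ed d → ℝ := sgn x with hσdef
    have hσ : Signs s σ := sgn_signs
    have hxS : x ∈ cS A.space s σ :=
      ⟨hx.1, fun c hcm => sgn_mul_neg (hx.2 c hcm)⟩
    refine ⟨σ, hσ, ⟨x, hxS⟩, ?_⟩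
    rw [connectedComponentIn_W hσ hxS, closure_cS ⟨x, hxS⟩]
  · rintro ⟨σ, hσ, ⟨x, hxS⟩, rfl⟩
    refine ⟨x, ?_, ?_⟩
    · rw [hW]; exact cS_subset_W hxS
    · rw [hW, connectedComponentIn_W hσ hxS, closure_cS ⟨x, hxS⟩]

/-- perturbation into the open halfspace -/
lemma exists_strict_perturb {L : Submodule ℝ (Ed d)} {sdel : Finset (Ed d)} {τ : Ed d → ℝ}
    {nH : Ed d} (hnH : nH ∈ L) (hnH0 : nH ≠ 0) {ε : ℝ} (hε : ε = 1 ∨ ε = -1)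
    {x : Ed d} (hx : x ∈ cS L sdel τ) (hle : ε * ⟪nH, x⟫ ≤ 0) :
    ∃ y ∈ cS L sdel τ, ε * ⟪nH, y⟫ < 0 := by
  rcases lt_or_eq_of_le hle with h | h
  · exact ⟨x, hx, h⟩
  obtain ⟨δ, hδ0, hball⟩ := Metric.isOpen_iff.1 (isOpen_strict (s := sdel) (σ := τ)) x hx.2
  have hn : 0 < ‖nH‖ := norm_pos_iff.2 hnH0
  set t := δ / (2 * ‖nH‖) with htdef
  have ht0 : 0 < t := by positivity
  have habs : |ε| = 1 := by rcases hε with h1 | h1 <;> rw [h1] <;> norm_num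
  have hεsq : ε * ε = 1 := by rcases hε with h1 | h1 <;> rw [h1] <;> norm_num
  refine ⟨x - t • (ε • nH), ⟨L.sub_mem hx.1 (L.smul_mem _ (L.smul_mem _ hnH)), hball ?_⟩, ?_⟩
  · rw [Metric.mem_ball, dist_eq_norm, sub_sub_cancel_left, norm_neg, norm_smul, norm_smul,
      Real.norm_eq_abs, Real.norm_eq_abs, abs_of_pos ht0, habs, one_mul, htdef,
      div_mul_eq_mul_div, div_lt_iff₀ (by positivity)]
    nlinarith
  · have hexp : ⟪nH, x - t • (ε • nH)⟫ = ⟪nH, x⟫ - t * (ε * ⟪nH, nH⟫) := by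
      rw [inner_sub_right, inner_smul_right, inner_smul_right]
    rw [hexp]
    have hcc : ⟪nH, nH⟫ = ‖nH‖ ^ 2 := real_inner_self_eq_norm_sq nH
    have hx0 : ε * ⟪nH, x⟫ = 0 := h
    have : ε * (⟪nH, x⟫ - t * (ε * ⟪nH, nH⟫))
        = ε * ⟪nH, x⟫ - (ε * ε) * (t * ⟪nH, nH⟫) := by ring
    rw [this, hx0, hεsq, hcc]
    have : 0 < t * ‖nH‖ ^ 2 := by positivity
    linarith

/-- E3: cells of the full arrangement do not meet the hyperplane `H`. -/
lemma fanInter_eq_empty [DecidableEq (Ed d)] {L : Submodule ℝ (Ed d)} {sdel : Finset (Ed d)}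
    {nH : Ed d}
    (hcins : ∀ c ∈ insert nH sdel, c ∈ L ∧ c ≠ 0) :
    fanInter d (fanSet L (insert nH sdel)) {x | ⟪nH, x⟫ = 0} = ∅ := by
  ext D
  simp only [Set.mem_empty_iff_false, iff_false]
  rintro ⟨C, ⟨σ, hσ, hne, rfl⟩, ⟨x, hx1, hx2⟩, -⟩
  rw [intrinsicInterior_cC hcins hσ hne] at hx1
  have hlt := hx1.2 nH (Finset.mem_insert_self _ _)
  have h0 : ⟪nH, x⟫ = 0 := hx2
  rw [h0, mul_zero] at hlt
  exact lt_irrefl 0 hlt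

/-- E1/E2: deletion of `H` does not change the part of the fan on either side of `H`. -/
lemma fanInter_halfspace [DecidableEq (Ed d)] {L : Submodule ℝ (Ed d)} {sdel : Finset (Ed d)}
    {nH : Ed d}
    (hc : ∀ c ∈ sdel, c ∈ L ∧ c ≠ 0) (hnH : nH ∈ L) (hnH0 : nH ≠ 0) (hnotin : nH ∉ sdel)
    {ε : ℝ} (hε : ε = 1 ∨ ε = -1) :
    fanInter d (fanSet L (insert nH sdel)) {x | ε * ⟪nH, x⟫ ≤ 0}
      = fanInter d (fanSet L sdel) {x | ε * ⟪nH, x⟫ ≤ 0} := by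
  have hcins : ∀ c ∈ insert nH sdel, c ∈ L ∧ c ≠ 0 := by
    intro c hcmem
    rcases Finset.mem_insert.1 hcmem with rfl | hmem
    · exact ⟨hnH, hnH0⟩
    · exact hc c hmem
  ext D
  constructor
  · rintro ⟨C, ⟨σ, hσ, hne, rfl⟩, hmeet, rfl⟩
    rw [intrinsicInterior_cC hcins hσ hne] at hmeet
    obtain ⟨x, hxS, hxH⟩ := hmeet
    have h2 : ε * ⟪nH, x⟫ ≤ 0 := hxH
    have h1 := hxS.2 nH (Finset.mem_insert_self _ _)
    have hσH : σ nH = ε := by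
      rcases hσ nH (Finset.mem_insert_self _ _) with hs | hs <;> rcases hε with he | he
      · rw [hs, he]
      · exfalso; rw [hs, one_mul] at h1; rw [he, neg_one_mul] at h2; linarith
      · exfalso; rw [hs, neg_one_mul] at h1; rw [he, one_mul] at h2; linarith
      · rw [hs, he]
    have hσdel : Signs sdel σ := fun c hcm => hσ c (Finset.mem_insert_of_mem hcm)
    have hxSdel : x ∈ cS L sdel σ :=
      ⟨hxS.1, fun c hcm => hxS.2 c (Finset.mem_insert_of_mem hcm)⟩
    refine ⟨cC L sdel σ, ⟨σ, hσdel, ⟨x, hxSdel⟩, rfl⟩, ?_, ?_⟩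
    · rw [intrinsicInterior_cC hc hσdel ⟨x, hxSdel⟩]
      exact ⟨x, hxSdel, hxH⟩
    · ext z
      simp only [Set.mem_inter_iff, Set.mem_setOf_eq]
      constructor
      · rintro ⟨hz1, hz2⟩
        exact ⟨⟨hz1.1, fun c hcm => hz1.2 c (Finset.mem_insert_of_mem hcm)⟩, hz2⟩
      · rintro ⟨hz1, hz2⟩
        refine ⟨⟨hz1.1, fun c hcm => ?_⟩, hz2⟩
        rcases Finset.mem_insert.1 hcm with rfl | hm
        · rw [hσH]; exact hz2
        · exact hz1.2 c hm
  · rintro ⟨C, ⟨τ, hτ, hne, rfl⟩, hmeet, rfl⟩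
    rw [intrinsicInterior_cC hc hτ hne] at hmeet
    obtain ⟨x, hxS, hxH⟩ := hmeet
    obtain ⟨y, hyS, hyH⟩ := exists_strict_perturb hnH hnH0 hε hxS hxH
    classical
    set σ := Function.update τ nH ε with hσdef
    have hστ : ∀ c ∈ sdel, σ c = τ c := fun c hcm =>
      Function.update_of_ne (fun hq => hnotin (by rw [← hq]; exact hcm)) _ _
    have hσH : σ nH = ε := Function.update_self _ _ _
    have hσ : Signs (insert nH sdel) σ := by
      intro c hcm
      rcases Finset.mem_insert.1 hcm with rfl | hm
      · rw [hσH]; exact hε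
      · rw [hστ c hm]; exact hτ c hm
    have hyS' : y ∈ cS L (insert nH sdel) σ := by
      refine ⟨hyS.1, fun c hcm => ?_⟩
      rcases Finset.mem_insert.1 hcm with rfl | hm
      · rw [hσH]; exact hyH
      · rw [hστ c hm]; exact hyS.2 c hm
    refine ⟨cC L (insert nH sdel) σ, ⟨σ, hσ, ⟨y, hyS'⟩, rfl⟩, ?_, ?_⟩
    · rw [intrinsicInterior_cC hcins hσ ⟨y, hyS'⟩]
      exact ⟨y, hyS', hyH.le⟩
    · ext z
      simp only [Set.mem_inter_iff, Set.mem_setOf_eq]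
      constructor
      · rintro ⟨hz1, hz2⟩
        refine ⟨⟨hz1.1, fun c hcm => ?_⟩, hz2⟩
        rcases Finset.mem_insert.1 hcm with rfl | hm
        · rw [hσH]; exact hz2
        · rw [hστ c hm]; exact hz1.2 c hm
      · rintro ⟨hz1, hz2⟩
        refine ⟨⟨hz1.1, fun c hcm => ?_⟩, hz2⟩
        rw [← hστ c hcm]
        exact hz1.2 c (Finset.mem_insert_of_mem hcm)

section Restrict

variable [DecidableEq (Ed d)]
variable {L Hs : Submodule ℝ (Ed d)} {sdel : Finset (Ed d)} {nH : Ed d} {p : Ed d → Ed d}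
variable {τ σ' : Ed d → ℝ}

lemma cS_restrict_eq (hHs : ∀ x, x ∈ Hs ↔ x ∈ L ∧ ⟪nH, x⟫ = 0)
    (hp : ∀ c ∈ sdel, p c ∈ Hs ∧ p c ≠ 0 ∧ ∀ x ∈ Hs, ⟪p c, x⟫ = ⟪c, x⟫)
    (hkey : ∀ c ∈ sdel, σ' (p c) = τ c) :
    cS Hs (sdel.image p) σ' = cS L sdel τ ∩ {z | ⟪nH, z⟫ = 0} := by
  ext z
  constructor
  · intro hz
    have hzHs := hz.1
    refine ⟨⟨((hHs z).1 hzHs).1, fun c hcm => ?_⟩, ((hHs z).1 hzHs).2⟩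
    have := hz.2 (p c) (Finset.mem_image_of_mem p hcm)
    rwa [hkey c hcm, (hp c hcm).2.2 z hzHs] at this
  · rintro ⟨hz1, hz2⟩
    have hzHs : z ∈ Hs := (hHs z).2 ⟨hz1.1, hz2⟩
    refine ⟨hzHs, fun q hq => ?_⟩
    obtain ⟨c, hcm, rfl⟩ := Finset.mem_image.1 hq
    rw [hkey c hcm, (hp c hcm).2.2 z hzHs]
    exact hz1.2 c hcm

lemma cC_restrict_eq (hHs : ∀ x, x ∈ Hs ↔ x ∈ L ∧ ⟪nH, x⟫ = 0)
    (hp : ∀ c ∈ sdel, p c ∈ Hs ∧ p c ≠ 0 ∧ ∀ x ∈ Hs, ⟪p c, x⟫ = ⟪c, x⟫)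
    (hkey : ∀ c ∈ sdel, σ' (p c) = τ c) :
    cC Hs (sdel.image p) σ' = cC L sdel τ ∩ {z | ⟪nH, z⟫ = 0} := by
  ext z
  constructor
  · intro hz
    have hzHs := hz.1
    refine ⟨⟨((hHs z).1 hzHs).1, fun c hcm => ?_⟩, ((hHs z).1 hzHs).2⟩
    have := hz.2 (p c) (Finset.mem_image_of_mem p hcm)
    rwa [hkey c hcm, (hp c hcm).2.2 z hzHs] at this
  · rintro ⟨hz1, hz2⟩
    have hzHs : z ∈ Hs := (hHs z).2 ⟨hz1.1, hz2⟩
    refine ⟨hzHs, fun q hq => ?_⟩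
    obtain ⟨c, hcm, rfl⟩ := Finset.mem_image.1 hq
    rw [hkey c hcm, (hp c hcm).2.2 z hzHs]
    exact hz1.2 c hcm

/-- E4: the part of the deleted fan lying in `H` is the fan of the restriction. -/
lemma fanInter_restrict (hc : ∀ c ∈ sdel, c ∈ L ∧ c ≠ 0)
    (hHs : ∀ x, x ∈ Hs ↔ x ∈ L ∧ ⟪nH, x⟫ = 0)
    (hp : ∀ c ∈ sdel, p c ∈ Hs ∧ p c ≠ 0 ∧ ∀ x ∈ Hs, ⟪p c, x⟫ = ⟪c, x⟫) :
    fanInter d (fanSet L sdel) {x | ⟪nH, x⟫ = 0} = fanSet Hs (sdel.image p) := by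
  classical
  ext D
  constructor
  · rintro ⟨C, ⟨τ, hτ, hne, rfl⟩, hmeet, rfl⟩
    rw [intrinsicInterior_cC hc hτ hne] at hmeet
    obtain ⟨x, hxS, hxH⟩ := hmeet
    have hx0 : ⟪nH, x⟫ = 0 := hxH
    have hxHs : x ∈ Hs := (hHs x).2 ⟨hxS.1, hx0⟩
    set σ : Ed d → ℝ := sgn x with hσdef
    have hσ : Signs (sdel.image p) σ := sgn_signs
    have hkey : ∀ c ∈ sdel, σ (p c) = τ c := by
      intro c hcm
      have hip : ⟪p c, x⟫ = ⟪c, x⟫ := (hp c hcm).2.2 x hxHs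
      have hst : τ c * ⟪c, x⟫ < 0 := hxS.2 c hcm
      rcases hτ c hcm with h1 | h1
      · rw [h1, one_mul] at hst
        rw [h1, hσdef]
        exact sgn_eq_one (by rw [hip]; exact hst)
      · rw [h1, neg_one_mul] at hst
        rw [h1, hσdef]
        exact sgn_eq_negone (by rw [hip]; linarith)
    refine ⟨σ, hσ, ?_, ?_⟩
    · rw [cS_restrict_eq hHs hp hkey]
      exact ⟨x, hxS, hx0⟩
    · exact (cC_restrict_eq hHs hp hkey).symm
  · rintro ⟨σ, hσ, ⟨x, hxS⟩, rfl⟩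
    set τ : Ed d → ℝ := sgn x with hτdef
    have hτ : Signs sdel τ := sgn_signs
    have hxHs : x ∈ Hs := hxS.1
    have hxL : x ∈ L := ((hHs x).1 hxHs).1
    have hx0 : ⟪nH, x⟫ = 0 := ((hHs x).1 hxHs).2
    have hkey : ∀ c ∈ sdel, σ (p c) = τ c := by
      intro c hcm
      have hip : ⟪p c, x⟫ = ⟪c, x⟫ := (hp c hcm).2.2 x hxHs
      have hst : σ (p c) * ⟪p c, x⟫ < 0 := hxS.2 (p c) (Finset.mem_image_of_mem p hcm)
      rcases hσ (p c) (Finset.mem_image_of_mem p hcm) with h1 | h1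
      · rw [h1, one_mul, hip] at hst
        rw [h1, hτdef, sgn_eq_one hst]
      · rw [h1, neg_one_mul, hip] at hst
        rw [h1, hτdef, sgn_eq_negone (by linarith)]
    have hxSdel : x ∈ cS L sdel τ := by
      have : x ∈ cS L sdel τ ∩ {z | ⟪nH, z⟫ = 0} := by
        rw [← cS_restrict_eq hHs hp hkey]; exact hxS
      exact this.1
    refine ⟨cC L sdel τ, ⟨τ, hτ, ⟨x, hxSdel⟩, rfl⟩, ?_, ?_⟩
    · rw [intrinsicInterior_cC hc hτ ⟨x, hxSdel⟩]
      exact ⟨x, hxSdel, hx0⟩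
    · exact cC_restrict_eq hHs hp hkey

end Restrict

/-- N1: every hyperplane of a subspace has a normal vector inside the subspace. -/
lemma exists_normal {H L : Submodule ℝ (Ed d)} (h : IsHyperplaneOf d H L) :
    ∃ c : Ed d, c ∈ L ∧ c ≠ 0 ∧ ∀ x ∈ L, (x ∈ H ↔ ⟪c, x⟫ = 0) := by
  obtain ⟨hle, hrank⟩ := h
  have hlt : H < L := lt_of_le_of_ne hle (by intro hEq; rw [hEq] at hrank; omega)
  obtain ⟨y, hyL, hyH⟩ := SetLike.exists_of_lt hlt
  haveI : CompleteSpace H := FiniteDimensional.complete ℝ H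
  set c := y - (H.orthogonalProjectionOnto y : Ed d) with hcdef
  have hcH : c ∈ Hᗮ := Submodule.sub_starProjection_mem_orthogonal (K := H) y
  have hcL : c ∈ L := L.sub_mem hyL (hle (H.orthogonalProjectionOnto y).2)
  have hc0 : c ≠ 0 := by
    intro h0
    apply hyH
    have hyeq : y = (H.orthogonalProjectionOnto y : Ed d) := sub_eq_zero.1 h0
    rw [hyeq]
    exact (H.orthogonalProjectionOnto y).2
  set K := L ⊓ (Submodule.span ℝ {c})ᗮ with hKdef
  have hmemK : ∀ x, x ∈ K ↔ x ∈ L ∧ ⟪c, x⟫ = 0 := by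
    intro x
    rw [hKdef, Submodule.mem_inf]
    refine and_congr_right fun _ => ?_
    rw [Submodule.mem_orthogonal_singleton_iff_inner_left, real_inner_comm]
  have hHK : H ≤ K := by
    intro z hz
    rw [hmemK]
    refine ⟨hle hz, ?_⟩
    rw [Submodule.mem_orthogonal] at hcH
    rw [real_inner_comm]
    exact hcH z hz
  have hKlt : K < L := by
    refine lt_of_le_of_ne inf_le_left ?_
    intro hEq
    have hcK : c ∈ K := by rw [hEq]; exact hcL
    rw [hmemK] at hcK
    exact hc0 (inner_self_eq_zero.1 hcK.2)
  have hfr : Module.finrank ℝ K < Module.finrank ℝ L := Submodule.finrank_lt_finrank_of_lt hKlt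
  have hHKeq : H = K := Submodule.eq_of_le_of_finrank_le hHK (by omega)
  refine ⟨c, hcL, hc0, fun x hxL => ?_⟩
  rw [hHKeq, hmemK]
  simp [hxL]

end FVDR

/-- Fan valuations satisfy deletion-restriction on hyperplane
arrangements that are not singletons. -/
theorem fan_valuation_deletion_restriction
    (d : ℕ) {G : Type*} [AddCommGroup G] (φ : Set (Set (Ed d)) → G)
    (hval : IsFanValuation d φ)
    (A : Arrangement d) (hA : A.IsArrangement) (hcard : A.hyps.card ≠ 1)
    (H : Submodule ℝ (Ed d)) (hH : H ∈ A.hyps) :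
    φ (arrFan A) = φ (arrFan (A.delete H)) + φ (arrFan (A.restrict H)) := by
  classical
  obtain ⟨hphi0, hvalmain⟩ := hval
  have hex : ∀ K : Submodule ℝ (Ed d), ∃ c : Ed d,
      K ∈ A.hyps → (c ∈ A.space ∧ c ≠ 0 ∧ ∀ x ∈ A.space, (x ∈ K ↔ ⟪c, x⟫ = 0)) := by
    intro K
    by_cases hK : K ∈ A.hyps
    · obtain ⟨c, hc⟩ := FVDR.exists_normal (hA K hK)
      exact ⟨c, fun _ => hc⟩
    · exact ⟨0, fun h => absurd h hK⟩
  choose n hn using hex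
  have hnH := hn H hH
  have hdelhyps : ∀ K, K ∈ (A.delete H).hyps ↔ K ≠ H ∧ K ∈ A.hyps := by
    intro K
    show K ∈ Finset.erase A.hyps H ↔ _
    exact Finset.mem_erase
  set sdel : Finset (Ed d) := (A.delete H).hyps.image n with hsdel
  have hnHnotin : n H ∉ sdel := by
    rw [hsdel]
    intro hmem
    obtain ⟨K, hK, hKeq⟩ := Finset.mem_image.1 hmem
    obtain ⟨hKne, hKmem⟩ := (hdelhyps K).1 hK
    apply hKne
    have h1 := hn K hKmem
    apply le_antisymm
    · intro z hz
      have hzL : z ∈ A.space := (hA K hKmem).1 hz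
      exact ((hnH.2.2 z hzL)).2 (by rw [← hKeq]; exact ((h1.2.2 z hzL)).1 hz)
    · intro z hz
      have hzL : z ∈ A.space := (hA H hH).1 hz
      exact ((h1.2.2 z hzL)).2 (by rw [hKeq]; exact ((hnH.2.2 z hzL)).1 hz)
  have hsdelprop : ∀ c ∈ sdel, c ∈ A.space ∧ c ≠ 0 := by
    intro c hc
    rw [hsdel] at hc
    obtain ⟨K, hK, rfl⟩ := Finset.mem_image.1 hc
    have := hn K ((hdelhyps K).1 hK).2
    exact ⟨this.1, this.2.1⟩
  have hinsprop : ∀ c ∈ insert (n H) sdel, c ∈ A.space ∧ c ≠ 0 := by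
    intro c hc
    rcases Finset.mem_insert.1 hc with rfl | hm
    · exact ⟨hnH.1, hnH.2.1⟩
    · exact hsdelprop c hm
  have hsA : A.hyps.image n = insert (n H) sdel := by
    rw [hsdel]
    have herase : (A.delete H).hyps = A.hyps.erase H := by
      ext K; rw [hdelhyps, Finset.mem_erase]
    rw [herase]
    conv_lhs => rw [← Finset.insert_erase hH]
    rw [Finset.image_insert]
  have hFanA : arrFan A = FVDR.fanSet A.space (insert (n H) sdel) := by
    rw [← hsA]
    apply FVDR.arrFan_eq
    intro x hxL
    constructor
    · intro hall c hcm h0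
      obtain ⟨K, hK, rfl⟩ := Finset.mem_image.1 hcm
      exact hall K hK (((hn K hK).2.2 x hxL).2 h0)
    · intro hall K hK hxK
      exact hall (n K) (Finset.mem_image_of_mem n hK) (((hn K hK).2.2 x hxL).1 hxK)
  have hFanDel : arrFan (A.delete H) = FVDR.fanSet A.space sdel := by
    have := FVDR.arrFan_eq (A.delete H) sdel ?_
    · exact this
    · intro x hxL
      have hxL' : x ∈ A.space := hxL
      constructor
      · intro hall c hcm h0
        rw [hsdel] at hcm
        obtain ⟨K, hK, rfl⟩ := Finset.mem_image.1 hcm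
        have hKA := ((hdelhyps K).1 hK).2
        exact hall K hK (((hn K hKA).2.2 x hxL').2 h0)
      · intro hall K hK hxK
        have hKA := ((hdelhyps K).1 hK).2
        have hmem : n K ∈ sdel := by rw [hsdel]; exact Finset.mem_image_of_mem n hK
        exact hall (n K) hmem (((hn K hKA).2.2 x hxL').1 hxK)
  haveI : CompleteSpace H := FiniteDimensional.complete ℝ H
  set p : Ed d → Ed d := fun c => (H.orthogonalProjectionOnto c : Ed d) with hpdef
  have hHs : ∀ x, x ∈ H ↔ x ∈ A.space ∧ ⟪n H, x⟫ = 0 := by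
    intro x
    constructor
    · intro hx
      have hxL := (hA H hH).1 hx
      exact ⟨hxL, (hnH.2.2 x hxL).1 hx⟩
    · rintro ⟨hxL, h0⟩
      exact (hnH.2.2 x hxL).2 h0
  have hproj_inner : ∀ c : Ed d, ∀ x ∈ H, ⟪p c, x⟫ = ⟪c, x⟫ := by
    intro c x hx
    have hsub : c - p c ∈ Hᗮ := Submodule.sub_starProjection_mem_orthogonal (K := H) c
    rw [Submodule.mem_orthogonal] at hsub
    have h1 : ⟪x, c⟫ - ⟪x, p c⟫ = 0 := by
      rw [← inner_sub_right]; exact hsub x hx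
    have h2 := real_inner_comm x (p c)
    have h3 := real_inner_comm x c
    linarith
  have hp : ∀ c ∈ sdel, p c ∈ H ∧ p c ≠ 0 ∧ ∀ x ∈ H, ⟪p c, x⟫ = ⟪c, x⟫ := by
    intro c hc
    rw [hsdel] at hc
    obtain ⟨K, hK, rfl⟩ := Finset.mem_image.1 hc
    obtain ⟨hKne, hKA⟩ := (hdelhyps K).1 hK
    refine ⟨(H.orthogonalProjectionOnto (n K)).2, ?_, hproj_inner (n K)⟩
    intro h0
    have hHK : H ≤ K := by
      intro z hz
      have hzL := (hA H hH).1 hz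
      apply ((hn K hKA).2.2 z hzL).2
      have hpi := hproj_inner (n K) z hz
      rw [← hpi, h0, inner_zero_left]
    have hfrK := (hA K hKA).2
    have hfrH := (hA H hH).2
    have : H = K := Submodule.eq_of_le_of_finrank_le hHK (by omega)
    exact hKne this.symm
  have hFanRes : arrFan (A.restrict H) = FVDR.fanSet H (sdel.image p) := by
    have := FVDR.arrFan_eq (A.restrict H) (sdel.image p) ?_
    · exact this
    · intro x hxH'
      have hxH : x ∈ H := hxH'
      have hxL : x ∈ A.space := (hA H hH).1 hxH
      have hreshyps : ∀ K', K' ∈ (A.restrict H).hyps ↔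
          ∃ K, (K ≠ H ∧ K ∈ A.hyps) ∧ K ⊓ H = K' := by
        intro K'
        show K' ∈ (A.hyps.erase H).image (fun H' => H' ⊓ H) ↔ _
        rw [Finset.mem_image]
        constructor
        · rintro ⟨K, hK, hKeq⟩; exact ⟨K, Finset.mem_erase.1 hK, hKeq⟩
        · rintro ⟨K, hK, hKeq⟩; exact ⟨K, Finset.mem_erase.2 hK, hKeq⟩
      constructor
      · intro hall q hq h0
        obtain ⟨c, hcm, rfl⟩ := Finset.mem_image.1 hq
        rw [hsdel] at hcm
        obtain ⟨K, hK, rfl⟩ := Finset.mem_image.1 hcm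
        obtain ⟨hKne, hKA⟩ := (hdelhyps K).1 hK
        refine hall (K ⊓ H) ((hreshyps _).2 ⟨K, ⟨hKne, hKA⟩, rfl⟩) ?_
        rw [Submodule.mem_inf]
        refine ⟨((hn K hKA).2.2 x hxL).2 ?_, hxH⟩
        rw [← hproj_inner (n K) x hxH]
        exact h0
      · intro hall K' hK' hxK'
        obtain ⟨K, ⟨hKne, hKA⟩, rfl⟩ := (hreshyps K').1 hK'
        have hxK : x ∈ K := (Submodule.mem_inf.1 hxK').1
        have h0 : ⟪n K, x⟫ = 0 := ((hn K hKA).2.2 x hxL).1 hxK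
        have hcm : n K ∈ sdel := by
          rw [hsdel]
          exact Finset.mem_image_of_mem n ((hdelhyps K).2 ⟨hKne, hKA⟩)
        apply hall (p (n K)) (Finset.mem_image_of_mem p hcm)
        rw [hproj_inner (n K) x hxH, h0]
  have hFanAIs := FVDR.isFan_fanSet hinsprop
  have hFanDelIs := FVDR.isFan_fanSet hsdelprop
  have hspanA : ∀ C ∈ FVDR.fanSet A.space (insert (n H) sdel), n H ∈ Submodule.span ℝ C := by
    rintro C ⟨σ, hσ, hne, rfl⟩
    rw [FVDR.span_cC (fun c hc => (hinsprop c hc).1) hne]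
    exact hnH.1
  have hspanD : ∀ C ∈ FVDR.fanSet A.space sdel, n H ∈ Submodule.span ℝ C := by
    rintro C ⟨σ, hσ, hne, rfl⟩
    rw [FVDR.span_cC (fun c hc => (hsdelprop c hc).1) hne]
    exact hnH.1
  have h1 := hvalmain _ hFanAIs (n H) hnH.2.1 hspanA
  have h2 := hvalmain _ hFanDelIs (n H) hnH.2.1 hspanD
  have hset1 : {x : Ed d | ⟪n H, x⟫ ≤ 0} = {x : Ed d | (1:ℝ) * ⟪n H, x⟫ ≤ 0} := by
    ext z; simp
  have hset2 : {x : Ed d | 0 ≤ ⟪n H, x⟫} = {x : Ed d | (-1:ℝ) * ⟪n H, x⟫ ≤ 0} := by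
    ext z
    simp only [Set.mem_setOf_eq, neg_one_mul, neg_nonpos]
  rw [hset1, hset2] at h1 h2
  rw [FVDR.fanInter_halfspace hsdelprop hnH.1 hnH.2.1 hnHnotin (Or.inl rfl),
    FVDR.fanInter_halfspace hsdelprop hnH.1 hnH.2.1 hnHnotin (Or.inr rfl),
    FVDR.fanInter_eq_empty hinsprop, hphi0] at h1
  rw [FVDR.fanInter_restrict hsdelprop hHs hp] at h2
  rw [hFanA, hFanDel, hFanRes, h1, h2]
  abel
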